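/- arXiv:1804.08111 — 2 statements merged into one kernel-verified Lean document; each statement's English description precedes it below -/
import Mathlib

section
/- Let p ∈ (0,1), q ≥ 1, and ε ∈ (0, 1/q). Let G = (V,E) be a finite graph and u, v vertices with {u,v} ∉ E such that φ_G(u↔v) ≤ ε, and let G' = (V, E ∪ {{u,v}}). Then the partition functions of the random-cluster model with parameters p, q satisfy |(p/q + 1 − p)·Z^{rc}_G / Z^{rc}_{G'} − 1| ≤ qε. -/
open scoped Classical

/-- Number of connected components of the spanning subgraph of `V` with edge set `S`
(isolated vertices count). -/
noncomputable def rcK {V : Type} [Fintype V] (S : Finset (Sym2 V)) : ℕ :=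
  Nat.card (SimpleGraph.fromEdgeSet (↑S : Set (Sym2 V))).ConnectedComponent

/-- Random-cluster weight of the configuration `S ⊆ E`. -/
noncomputable def rcW {V : Type} [Fintype V] (E : Finset (Sym2 V)) (p q : ℝ)
    (S : Finset (Sym2 V)) : ℝ :=
  p ^ S.card * (1 - p) ^ (E \ S).card * q ^ rcK S

/-- Random-cluster partition function. -/
noncomputable def rcZ {V : Type} [Fintype V] (E : Finset (Sym2 V)) (p q : ℝ) : ℝ :=
  ∑ S ∈ E.powerset, rcW E p q S

/-- Random-cluster probability of the configuration `S ⊆ E`. -/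
noncomputable def rcP {V : Type} [Fintype V] (E : Finset (Sym2 V)) (p q : ℝ)
    (S : Finset (Sym2 V)) : ℝ :=
  rcW E p q S / rcZ E p q

open SimpleGraph

private lemma reach_sup_edge {V : Type} {G : SimpleGraph V} {u v a b : V}
    (h : (G ⊔ edge u v).Reachable a b) :
    G.Reachable a b ∨ (G.Reachable a u ∧ G.Reachable v b) ∨
      (G.Reachable a v ∧ G.Reachable u b) := by
  obtain ⟨w⟩ := h
  induction w with
  | nil => exact Or.inl (Reachable.refl _)
  | @cons a c b h p ih =>
    rcases h with h | h
    · rcases ih with h2 | ⟨h2, h3⟩ | ⟨h2, h3⟩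
      · exact Or.inl (h.reachable.trans h2)
      · exact Or.inr (Or.inl ⟨h.reachable.trans h2, h3⟩)
      · exact Or.inr (Or.inr ⟨h.reachable.trans h2, h3⟩)
    · rw [edge_adj] at h
      obtain ⟨⟨rfl, rfl⟩ | ⟨rfl, rfl⟩, hne⟩ := h
      · rcases ih with h2 | ⟨h2, h3⟩ | ⟨h2, h3⟩
        · exact Or.inr (Or.inl ⟨Reachable.refl _, h2⟩)
        · exact Or.inl (h2.symm.trans h3)
        · exact Or.inl h3
      · rcases ih with h2 | ⟨h2, h3⟩ | ⟨h2, h3⟩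
        · exact Or.inr (Or.inr ⟨Reachable.refl _, h2⟩)
        · exact Or.inl h3
        · exact Or.inl (h2.symm.trans h3)

private lemma card_cc_sup_edge_reach {V : Type} {G : SimpleGraph V} {u v : V}
    (huv : G.Reachable u v) :
    Nat.card (G ⊔ edge u v).ConnectedComponent = Nat.card G.ConnectedComponent := by
  symm
  apply Nat.card_eq_of_bijective
    (ConnectedComponent.map (Hom.ofLE (le_sup_left : G ≤ G ⊔ edge u v)))
  constructor
  · refine ConnectedComponent.ind₂ ?_
    intro a b hc
    rw [ConnectedComponent.map_mk, ConnectedComponent.map_mk, ConnectedComponent.eq] at hc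
    apply ConnectedComponent.sound
    rcases reach_sup_edge hc with h | ⟨h1, h2⟩ | ⟨h1, h2⟩
    · exact h
    · exact (h1.trans huv).trans h2
    · exact (h1.trans huv.symm).trans h2
  · refine ConnectedComponent.ind ?_
    intro a
    exact ⟨G.connectedComponentMk a, rfl⟩

private lemma card_cc_sup_edge_not_reach {V : Type} [Finite V] {G : SimpleGraph V} {u v : V}
    (hne : u ≠ v) (h : ¬ G.Reachable u v) :
    Nat.card (G ⊔ edge u v).ConnectedComponent + 1 = Nat.card G.ConnectedComponent := by
  classical
  set f : G.ConnectedComponent → (G ⊔ edge u v).ConnectedComponent :=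
    ConnectedComponent.map (Hom.ofLE (le_sup_left : G ≤ G ⊔ edge u v)) with hf
  have hadj : (G ⊔ edge u v).Adj u v :=
    Or.inr ((edge_adj u v u v).mpr ⟨Or.inl ⟨rfl, rfl⟩, hne⟩)
  have key : ∀ c₁ c₂ : G.ConnectedComponent, c₁ ≠ G.connectedComponentMk v →
      c₂ ≠ G.connectedComponentMk v → f c₁ = f c₂ → c₁ = c₂ := by
    refine ConnectedComponent.ind₂ ?_
    intro a b h₁ h₂ hc
    simp only [hf, ConnectedComponent.map_mk] at hc
    rw [ConnectedComponent.eq] at hc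
    apply ConnectedComponent.sound
    rcases reach_sup_edge hc with h' | ⟨h1', h2'⟩ | ⟨h1', h2'⟩
    · exact h'
    · exact absurd (ConnectedComponent.sound h2'.symm) h₂
    · exact absurd (ConnectedComponent.sound h1') h₁
  have hbij : Function.Bijective
      (fun c : {c : G.ConnectedComponent // c ≠ G.connectedComponentMk v} => f c.1) := by
    constructor
    · intro x y hc
      exact Subtype.ext (key x.1 y.1 x.2 y.2 hc)
    · refine ConnectedComponent.ind ?_
      intro a
      by_cases ha : G.Reachable a v
      · refine ⟨⟨G.connectedComponentMk u, fun hc => h (ConnectedComponent.exact hc)⟩, ?_⟩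
        simp only [hf, ConnectedComponent.map_mk]
        exact ConnectedComponent.sound (hadj.reachable.trans (Reachable.mono le_sup_left ha.symm))
      · exact ⟨⟨G.connectedComponentMk a, fun hc => ha (ConnectedComponent.exact hc)⟩, rfl⟩
  have h1 : Nat.card {c : G.ConnectedComponent // c ≠ G.connectedComponentMk v}
      = Nat.card (G ⊔ edge u v).ConnectedComponent := Nat.card_eq_of_bijective _ hbij
  haveI : Fintype G.ConnectedComponent := Fintype.ofFinite _
  rw [← h1, Nat.card_eq_fintype_card, Nat.card_eq_fintype_card]
  simp only [ne_eq]
  rw [Fintype.card_subtype_compl, Fintype.card_subtype_eq]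
  have : 1 ≤ Fintype.card G.ConnectedComponent :=
    Fintype.card_pos_iff.mpr ⟨G.connectedComponentMk v⟩
  omega

private lemma fromEdgeSet_insert_eq {V : Type} (u v : V) (S : Finset (Sym2 V)) :
    SimpleGraph.fromEdgeSet (↑(insert s(u, v) S) : Set (Sym2 V)) =
      SimpleGraph.fromEdgeSet (↑S : Set (Sym2 V)) ⊔ edge u v := by
  rw [Finset.coe_insert, Set.insert_eq, fromEdgeSet_union, sup_comm]
  rfl

theorem stmt4 {V : Type} [Fintype V] (p : ℝ) (hp : p ∈ Set.Ioo (0 : ℝ) 1)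
    (q : ℝ) (hq : 1 ≤ q) (ε : ℝ) (hε : ε ∈ Set.Ioo (0 : ℝ) (1 / q))
    (E : Finset (Sym2 V)) (hE : ∀ e ∈ E, ¬ e.IsDiag)
    (u v : V) (huv : u ≠ v) (he : s(u, v) ∉ E)
    (hconn : (∑ S ∈ E.powerset,
        if (SimpleGraph.fromEdgeSet (↑S : Set (Sym2 V))).Reachable u v
        then rcP E p q S else 0) ≤ ε) :
    |(p / q + 1 - p) * rcZ E p q / rcZ (insert s(u, v) E) p q - 1| ≤ q * ε := by
  obtain ⟨hp0, hp1⟩ := hp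
  obtain ⟨hε0, hε1⟩ := hε
  have hq0 : (0 : ℝ) < q := lt_of_lt_of_le one_pos hq
  have hqne : q ≠ 0 := ne_of_gt hq0
  set e : Sym2 V := s(u, v) with hedef
  have hWpos : ∀ S : Finset (Sym2 V), 0 < rcW E p q S := by
    intro S
    exact mul_pos (mul_pos (pow_pos hp0 _) (pow_pos (by linarith) _)) (pow_pos hq0 _)
  have hZpos : 0 < rcZ E p q :=
    Finset.sum_pos (fun S _ => hWpos S) ⟨∅, Finset.empty_mem_powerset E⟩
  have hkey : ∀ S ∈ E.powerset,
      rcW (insert e E) p q S + rcW (insert e E) p q (insert e S)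
        = (p / q + 1 - p) * rcW E p q S
          + (p - p / q) * (if (SimpleGraph.fromEdgeSet (↑S : Set (Sym2 V))).Reachable u v
              then rcW E p q S else 0) := by
    intro S hS
    rw [Finset.mem_powerset] at hS
    have heS : e ∉ S := fun h => he (hS h)
    have hc1 : (insert e E \ S) = insert e (E \ S) := Finset.insert_sdiff_of_notMem _ heS
    have hc2 : (insert e E \ insert e S) = E \ S := by
      ext x
      simp only [Finset.mem_sdiff, Finset.mem_insert, not_or]
      constructor
      · rintro ⟨hx | hx, hx1, hx2⟩
        · exact absurd hx hx1
        · exact ⟨hx, hx2⟩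
      · rintro ⟨hx, hx2⟩
        exact ⟨Or.inr hx, fun h' => he (h' ▸ hx), hx2⟩
    have heES : e ∉ E \ S := fun h => he (Finset.mem_sdiff.mp h).1
    have hcard1 : (insert e S).card = S.card + 1 := Finset.card_insert_of_notMem heS
    have hcard2 : (insert e (E \ S)).card = (E \ S).card + 1 :=
      Finset.card_insert_of_notMem heES
    have hGsup := fromEdgeSet_insert_eq u v S
    by_cases hR : (SimpleGraph.fromEdgeSet (↑S : Set (Sym2 V))).Reachable u v
    · have hK : rcK (insert e S) = rcK S := by
        unfold rcK
        rw [hGsup]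
        exact card_cc_sup_edge_reach hR
      simp only [hR, if_true]
      unfold rcW
      rw [hK, hc1, hc2, hcard1, hcard2, pow_succ, pow_succ]
      field_simp
      ring
    · have hK : rcK (insert e S) + 1 = rcK S := by
        unfold rcK
        rw [hGsup]
        exact card_cc_sup_edge_not_reach huv hR
      simp only [hR, if_false, mul_zero, add_zero]
      unfold rcW
      rw [hc1, hc2, hcard1, hcard2, ← hK, pow_succ, pow_succ, pow_succ]
      field_simp
      ring
  have hsplit : rcZ (insert e E) p q
      = ∑ S ∈ E.powerset, (rcW (insert e E) p q S + rcW (insert e E) p q (insert e S)) := by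
    unfold rcZ
    rw [Finset.powerset_insert, Finset.sum_union, Finset.sum_image, ← Finset.sum_add_distrib]
    · intro S hS T hT hST
      rw [Finset.mem_coe, Finset.mem_powerset] at hS hT
      have h' : (insert e S).erase e = (insert e T).erase e := by rw [hST]
      rwa [Finset.erase_insert (fun h => he (hS h)),
        Finset.erase_insert (fun h => he (hT h))] at h'
    · rw [Finset.disjoint_right]
      intro T hT hT'
      rw [Finset.mem_image] at hT
      obtain ⟨S, hS, rfl⟩ := hT
      rw [Finset.mem_powerset] at hT'
      exact he (hT' (Finset.mem_insert_self _ _))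
  set A : ℝ := ∑ S ∈ E.powerset,
      (if (SimpleGraph.fromEdgeSet (↑S : Set (Sym2 V))).Reachable u v
        then rcW E p q S else 0) with hA
  have hZ' : rcZ (insert e E) p q = (p / q + 1 - p) * rcZ E p q + (p - p / q) * A := by
    rw [hsplit, Finset.sum_congr rfl hkey, Finset.sum_add_distrib, ← Finset.mul_sum,
      ← Finset.mul_sum]
    rfl
  have hA0 : 0 ≤ A := Finset.sum_nonneg fun S _ => by
    split
    · exact (hWpos S).le
    · exact le_rfl
  have hAε : A ≤ ε * rcZ E p q := by
    have hdiv : A / rcZ E p q ≤ ε := by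
      rw [hA, Finset.sum_div]
      refine le_trans (le_of_eq (Finset.sum_congr rfl fun S _ => ?_)) hconn
      split
      · rfl
      · exact zero_div _
    calc A = A / rcZ E p q * rcZ E p q := by field_simp
    _ ≤ ε * rcZ E p q := mul_le_mul_of_nonneg_right hdiv hZpos.le
  set c : ℝ := p / q + 1 - p with hc
  set t : ℝ := p - p / q with ht
  have hpq0 : 0 < p / q := div_pos hp0 hq0
  have hcpos : 0 < c := by
    rw [hc]; linarith
  have hpqp : p / q ≤ p := by
    rw [div_le_iff₀ hq0]; nlinarith
  have ht0 : 0 ≤ t := by rw [ht]; linarith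
  have htc : t ≤ q * c := by
    rw [ht, hc]
    have h1 : q * (p / q) = p := by field_simp
    nlinarith [mul_nonneg hq0.le (sub_nonneg.mpr hp1.le)]
  have hZ'pos : 0 < rcZ (insert e E) p q := by
    rw [hZ']
    have h1 := mul_pos hcpos hZpos
    have h2 := mul_nonneg ht0 hA0
    linarith
  have hkey2 : c * rcZ E p q / rcZ (insert e E) p q - 1
      = -(t * A / rcZ (insert e E) p q) := by
    have h' : c * rcZ E p q = rcZ (insert e E) p q - t * A := by
      rw [hZ']; ring
    rw [h', sub_div, div_self (ne_of_gt hZ'pos)]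
    ring
  rw [hkey2, abs_neg,
    abs_of_nonneg (div_nonneg (mul_nonneg ht0 hA0) hZ'pos.le), div_le_iff₀ hZ'pos, hZ']
  have h1 : t * A ≤ q * c * A := mul_le_mul_of_nonneg_right htc hA0
  have h2 : q * c * A ≤ q * c * (ε * rcZ E p q) :=
    mul_le_mul_of_nonneg_left hAε (by positivity)
  have h3 : 0 ≤ q * ε * (t * A) := mul_nonneg (by positivity) (mul_nonneg ht0 hA0)
  nlinarith [mul_nonneg ht0 hA0]
end

section
/- Let q ≥ 3 be an integer and B ∈ (0,1). Let P be a path with ℓ ≥ 2 vertices and endpoints u, v. Then for all colours c, c' ∈ [q], it holds that μ_P(σ_u = c, σ_v = c') ≥ B/(q(B+q−1)), where μ_P is the q-state Potts distribution on P with parameter B. -/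
open scoped Classical

/-- Number of monochromatic edges of the configuration `σ` in the graph `G`. -/
noncomputable def mEdges {W : Type} [Fintype W] (G : SimpleGraph W) {q : ℕ}
    (σ : W → Fin q) : ℕ :=
  (Finset.univ.filter fun e : Sym2 W => e ∈ G.edgeSet ∧ ∀ x ∈ e, ∀ y ∈ e, σ x = σ y).card

/-- Probability of the event `A` under the `q`-state Potts distribution on `G`
with parameter `B`. -/
noncomputable def pottsPr {W : Type} [Fintype W] (G : SimpleGraph W) (q : ℕ) (B : ℝ)
    (A : Set (W → Fin q)) : ℝ :=
  (∑ σ : W → Fin q, if σ ∈ A then B ^ mEdges G σ else 0) /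
    ∑ σ : W → Fin q, B ^ mEdges G σ

/-- Product of edge weights along the path. -/
noncomputable def pathW (B : ℝ) {q : ℕ} (n : ℕ) (σ : Fin (n+1) → Fin q) : ℝ :=
  ∏ i : Fin n, if σ i.castSucc = σ i.succ then B else 1

/-- Restricted partition function with both endpoints pinned. -/
noncomputable def pathS (B : ℝ) (q : ℕ) (n : ℕ) (c c' : Fin q) : ℝ :=
  ∑ σ : Fin (n+1) → Fin q, if σ 0 = c ∧ σ (Fin.last n) = c' then pathW B n σ else 0

lemma sum_cons_peel {q n : ℕ} (f : (Fin (n+1) → Fin q) → ℝ) :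
    ∑ σ : Fin (n+1) → Fin q, f σ = ∑ x : Fin q, ∑ τ : Fin n → Fin q, f (Fin.cons x τ) := by
  rw [← (Fintype.sum_equiv (Fin.consEquiv fun _ => Fin q) _ f fun p => rfl),
    Fintype.sum_prod_type]
  rfl

lemma pathW_cons (B : ℝ) {q : ℕ} (n : ℕ) (x : Fin q) (τ : Fin (n+1) → Fin q) :
    pathW B (n+1) (Fin.cons x τ) = (if x = τ 0 then B else 1) * pathW B n τ := by
  unfold pathW
  rw [Fin.prod_univ_succ]
  rfl

lemma pathS_succ (B : ℝ) (q n : ℕ) (c c' : Fin q) :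
    pathS B q (n+1) c c' = ∑ d : Fin q, (if c = d then B else 1) * pathS B q n d c' := by
  unfold pathS
  rw [sum_cons_peel]
  have h1 : ∀ (x : Fin q) (τ : Fin (n+1) → Fin q),
      (if (Fin.cons x τ : Fin (n+2) → Fin q) 0 = c ∧
          (Fin.cons x τ : Fin (n+2) → Fin q) (Fin.last (n+1)) = c'
        then pathW B (n+1) (Fin.cons x τ) else 0)
      = if x = c then (if τ (Fin.last n) = c'
          then (if c = τ 0 then B else 1) * pathW B n τ else 0) else 0 := by
    intro x τ
    have hzero : (Fin.cons x τ : Fin (n+2) → Fin q) 0 = x := rfl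
    have hlast : (Fin.cons x τ : Fin (n+2) → Fin q) (Fin.last (n+1)) = τ (Fin.last n) := rfl
    rw [pathW_cons, hzero, hlast]
    by_cases hx : x = c <;> by_cases hl : τ (Fin.last n) = c' <;> simp [hx, hl]
  simp only [h1]
  have h1b : ∀ x : Fin q,
      (∑ τ : Fin (n+1) → Fin q, if x = c then (if τ (Fin.last n) = c'
          then (if c = τ 0 then B else 1) * pathW B n τ else 0) else 0)
      = if x = c then (∑ τ : Fin (n+1) → Fin q, if τ (Fin.last n) = c'
          then (if c = τ 0 then B else 1) * pathW B n τ else 0) else 0 := by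
    intro x
    by_cases hx : x = c <;> simp [hx]
  simp only [h1b]
  rw [Finset.sum_ite_eq' Finset.univ c]
  simp only [Finset.mem_univ, if_true]
  have h2 : ∀ d : Fin q, ((if c = d then B else 1) *
      ∑ σ : Fin (n+1) → Fin q, if σ 0 = d ∧ σ (Fin.last n) = c' then pathW B n σ else 0)
      = ∑ τ : Fin (n+1) → Fin q,
          if τ 0 = d ∧ τ (Fin.last n) = c' then (if c = d then B else 1) * pathW B n τ else 0 := by
    intro d
    rw [Finset.mul_sum]
    apply Finset.sum_congr rfl
    intro τ _
    rw [mul_ite, mul_zero]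
  simp only [h2]
  rw [Finset.sum_comm]
  apply Finset.sum_congr rfl
  intro τ _
  by_cases hl : τ (Fin.last n) = c'
  · simp only [hl, and_true]
    rw [Finset.sum_ite_eq Finset.univ (τ 0) (fun d => (if c = d then B else 1) * pathW B n τ)]
    simp
  · simp [hl]

lemma pathS_formula (B : ℝ) (q : ℕ) (hq : (q:ℝ) ≠ 0) :
    ∀ (n : ℕ) (c c' : Fin q), pathS B q n c c'
      = ((B + q - 1)^n + (if c = c' then (q:ℝ) - 1 else -1) * (B-1)^n) / q := by
  intro n
  induction n with
  | zero =>
    intro c c'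
    have h0 : pathS B q 0 c c' = if c = c' then 1 else 0 := by
      unfold pathS
      rw [sum_cons_peel]
      have h1 : ∀ (x : Fin q) (τ : Fin 0 → Fin q),
          (if (Fin.cons x τ : Fin 1 → Fin q) 0 = c ∧
              (Fin.cons x τ : Fin 1 → Fin q) (Fin.last 0) = c'
            then pathW B 0 (Fin.cons x τ) else 0)
          = if x = c ∧ x = c' then 1 else 0 := by
        intro x τ
        have hW : pathW B 0 (Fin.cons x τ) = 1 := by unfold pathW; simp
        rw [hW]
        rfl
      simp only [h1]
      have h2 : ∀ x : Fin q,
          (∑ _τ : Fin 0 → Fin q, if x = c ∧ x = c' then (1:ℝ) else 0)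
          = if x = c ∧ x = c' then 1 else 0 := by
        intro x
        rw [Finset.sum_const, Finset.card_univ]
        simp
      simp only [h2]
      by_cases h : c = c'
      · subst h
        simp only [and_self]
        rw [Finset.sum_ite_eq' Finset.univ c (fun _ => (1:ℝ))]
        simp
      · rw [Finset.sum_eq_zero, if_neg h]
        intro x _
        rw [if_neg]
        rintro ⟨rfl, rfl⟩
        exact h rfl
    rw [h0]
    split_ifs with h
    · simp only [pow_zero]
      field_simp
      ring
    · simp only [pow_zero]
      norm_num
  | succ n ih =>
    intro c c'
    rw [pathS_succ]
    have hsum_eps : ∑ d : Fin q, (if d = c' then (q:ℝ) - 1 else -1) = 0 := by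
      have h1 : ∀ d : Fin q, (if d = c' then (q:ℝ) - 1 else -1)
          = (if d = c' then (q:ℝ) else 0) - 1 := by
        intro d; by_cases h : d = c' <;> simp [h]
      simp only [h1]
      rw [Finset.sum_sub_distrib, Finset.sum_ite_eq' Finset.univ c' (fun _ => (q:ℝ)),
        Finset.sum_const, Finset.card_univ, Fintype.card_fin]
      simp
    have h3 : ∑ d : Fin q, pathS B q n d c' = (B + q - 1)^n := by
      simp only [ih]
      rw [← Finset.sum_div]
      have h4 : ∑ d : Fin q, ((B + ↑q - 1)^n + (if d = c' then (q:ℝ) - 1 else -1) * (B-1)^n)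
          = q * (B + ↑q - 1)^n := by
        rw [Finset.sum_add_distrib, ← Finset.sum_mul, hsum_eps, zero_mul, add_zero,
          Finset.sum_const, Finset.card_univ, Fintype.card_fin, nsmul_eq_mul]
      rw [h4]
      exact mul_div_cancel_left₀ _ hq
    have h4 : ∀ d : Fin q, (if c = d then B else 1) * pathS B q n d c'
        = pathS B q n d c' + (if c = d then (B-1) * pathS B q n d c' else 0) := by
      intro d; by_cases h : c = d <;> simp [h] <;> ring
    simp only [h4]
    rw [Finset.sum_add_distrib, Finset.sum_ite_eq Finset.univ c
      (fun d => (B-1) * pathS B q n d c'), h3]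
    simp only [Finset.mem_univ, if_true]
    rw [ih c c']
    set E := (if c = c' then (q:ℝ) - 1 else -1) with hE
    field_simp
    ring

lemma pathZ (B : ℝ) (q : ℕ) :
    ∀ n : ℕ, ∑ σ : Fin (n+1) → Fin q, pathW B n σ = q * (B + q - 1)^n := by
  intro n
  induction n with
  | zero =>
    unfold pathW
    simp
  | succ n ih =>
    rw [sum_cons_peel]
    simp only [pathW_cons]
    have hw : ∀ d : Fin q, ∑ x : Fin q, (if x = d then B else 1) = B + ((q:ℝ) - 1) := by
      intro d
      have h1 : ∀ x : Fin q, (if x = d then B else 1) = (if x = d then B - 1 else 0) + 1 := by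
        intro x; by_cases h : x = d <;> simp [h]
      simp only [h1]
      rw [Finset.sum_add_distrib, Finset.sum_ite_eq' Finset.univ d (fun _ => B - 1),
        Finset.sum_const, Finset.card_univ, Fintype.card_fin]
      simp
      ring
    rw [Finset.sum_comm]
    have h2 : ∀ τ : Fin (n+1) → Fin q,
        ∑ x : Fin q, (if x = τ 0 then B else 1) * pathW B n τ
          = (B + ((q:ℝ) - 1)) * pathW B n τ := by
      intro τ
      rw [← Finset.sum_mul, hw]
    simp only [h2]
    rw [← Finset.mul_sum, ih]
    ring

lemma mEdges_path {q : ℕ} (n : ℕ) (σ : Fin (n+1) → Fin q) :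
    mEdges (SimpleGraph.pathGraph (n+1)) σ
      = (Finset.univ.filter fun i : Fin n => σ i.castSucc = σ i.succ).card := by
  unfold mEdges
  symm
  apply Finset.card_bij (fun (i : Fin n) _ => s(i.castSucc, i.succ))
  · intro i hi
    have hi' : σ i.castSucc = σ i.succ := by
      simp only [Finset.mem_filter] at hi
      exact hi.2
    simp only [Finset.mem_filter, Finset.mem_univ, true_and]
    refine ⟨?_, ?_⟩
    · rw [SimpleGraph.mem_edgeSet, SimpleGraph.pathGraph_adj]
      left
      simp
    · intro x hx y hy
      rw [Sym2.mem_iff] at hx hy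
      rcases hx with rfl | rfl <;> rcases hy with rfl | rfl <;>
        first | rfl | exact hi' | exact hi'.symm
  · intro a ha b hb h
    rw [Sym2.eq_iff] at h
    rcases h with ⟨h1, _⟩ | ⟨h1, h2⟩
    · exact Fin.castSucc_injective _ h1
    · have e1 := congrArg Fin.val h1
      have e2 := congrArg Fin.val h2
      simp only [Fin.coe_castSucc, Fin.val_succ] at e1 e2
      exact absurd e1 (by omega)
  · intro e he
    simp only [Finset.mem_filter, Finset.mem_univ, true_and] at he
    obtain ⟨hadj, hmono⟩ := he
    induction e with
    | _ u v =>
      rw [SimpleGraph.mem_edgeSet, SimpleGraph.pathGraph_adj] at hadj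
      rcases hadj with h | h
      · have hu : (u : ℕ) < n := by omega
        have e1 : (⟨u, hu⟩ : Fin n).castSucc = u := by ext; simp
        have e2 : (⟨u, hu⟩ : Fin n).succ = v := by ext; simp [h]
        refine ⟨⟨u, hu⟩, ?_, ?_⟩
        · simp only [Finset.mem_filter, Finset.mem_univ, true_and]
          rw [e1, e2]
          exact hmono u (by rw [Sym2.mem_iff]; left; rfl) v (by rw [Sym2.mem_iff]; right; rfl)
        · rw [e1, e2]
      · have hv : (v : ℕ) < n := by omega
        have e1 : (⟨v, hv⟩ : Fin n).castSucc = v := by ext; simp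
        have e2 : (⟨v, hv⟩ : Fin n).succ = u := by ext; simp [h]
        refine ⟨⟨v, hv⟩, ?_, ?_⟩
        · simp only [Finset.mem_filter, Finset.mem_univ, true_and]
          rw [e1, e2]
          exact hmono v (by rw [Sym2.mem_iff]; right; rfl) u (by rw [Sym2.mem_iff]; left; rfl)
        · rw [e1, e2, Sym2.eq_swap]

lemma pow_mEdges {q : ℕ} (B : ℝ) (n : ℕ) (σ : Fin (n+1) → Fin q) :
    B ^ mEdges (SimpleGraph.pathGraph (n+1)) σ = pathW B n σ := by
  rw [mEdges_path]
  unfold pathW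
  rw [Finset.prod_ite (fun _ => B) (fun _ => (1:ℝ)), Finset.prod_const, Finset.prod_const_one,
    mul_one]

theorem stmt17 (q : ℕ) (hq : 3 ≤ q) (B : ℝ) (hB : B ∈ Set.Ioo (0 : ℝ) 1)
    (ℓ : ℕ) (hℓ : 2 ≤ ℓ) (c c' : Fin q) :
    B / ((q : ℝ) * (B + (q : ℝ) - 1)) ≤
      pottsPr (SimpleGraph.pathGraph ℓ) q B
        {σ | σ ⟨0, by omega⟩ = c ∧ σ ⟨ℓ - 1, by omega⟩ = c'} := by
  obtain ⟨hB0, hB1⟩ := hB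
  obtain ⟨n, rfl⟩ : ∃ n, ℓ = n + 2 := ⟨ℓ - 2, by omega⟩
  have hq0 : (0:ℝ) < q := by
    have h : (0:ℕ) < q := by omega
    exact_mod_cast h
  have hq3 : (3:ℝ) ≤ q := by exact_mod_cast hq
  have hA : (0:ℝ) < B + ↑q - 1 := by linarith
  have hqne : (q:ℝ) ≠ 0 := ne_of_gt hq0
  have h1B : (0:ℝ) ≤ 1 - B := by linarith
  -- denominator
  have hden : ∀ (inst : Fintype (Fin (n+2) → Fin q)),
      (@Finset.sum _ ℝ _ (@Finset.univ _ inst)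
        fun σ => B ^ mEdges (SimpleGraph.pathGraph (n+2)) σ)
      = ↑q * (B + ↑q - 1)^(n+1) := by
    intro inst
    rw [Subsingleton.elim inst (Pi.instFintype : Fintype (Fin (n+2) → Fin q))]
    rw [Finset.sum_congr rfl fun σ _ => pow_mEdges B (n+1) σ]
    exact pathZ B q (n+1)
  -- numerator
  have hnum : ∀ (inst : Fintype (Fin (n+2) → Fin q)),
      (@Finset.sum _ ℝ _ (@Finset.univ _ inst) fun σ =>
      if σ ∈ {σ : Fin (n+2) → Fin q | σ ⟨0, by omega⟩ = c ∧ σ ⟨n + 2 - 1, by omega⟩ = c'}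
        then B ^ mEdges (SimpleGraph.pathGraph (n+2)) σ else 0)
      = pathS B q (n+1) c c' := by
    intro inst
    rw [Subsingleton.elim inst (Pi.instFintype : Fintype (Fin (n+2) → Fin q))]
    unfold pathS
    apply Finset.sum_congr rfl
    intro σ _
    rw [pow_mEdges]
    rfl
  -- key estimate
  have hpow : (1 - B)^n ≤ (B + ↑q - 1)^n := pow_le_pow_left₀ h1B (by linarith) n
  have h0 : |(B-1)^(n+1)| = (1-B) * (1-B)^n := by
    rw [abs_pow, abs_of_nonpos (show B - 1 ≤ 0 by linarith), pow_succ,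
      show -(B-1) = 1 - B from by ring]
    ring
  have hq1 : (0:ℝ) ≤ ↑q - 1 := by linarith
  have heps : -((↑q - 1) * (1-B) * (1-B)^n)
      ≤ (if c = c' then (q:ℝ) - 1 else -1) * (B-1)^(n+1) := by
    by_cases h : c = c'
    · rw [if_pos h]
      have hD : -((1-B) * (1-B)^n) ≤ (B-1)^(n+1) := by
        have h8 := neg_abs_le ((B-1)^(n+1))
        linarith [h0]
      have h9 := mul_le_mul_of_nonneg_left hD hq1
      nlinarith
    · rw [if_neg h]
      have hUp : (B-1)^(n+1) ≤ (1-B) * (1-B)^n := by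
        have h8 := le_abs_self ((B-1)^(n+1))
        linarith [h0]
      have h9 : 0 ≤ (↑q - 2) * ((1-B) * (1-B)^n) :=
        mul_nonneg (by linarith) (mul_nonneg h1B (pow_nonneg h1B n))
      nlinarith
  have h5 : (↑q - 1) * (1-B) * (1-B)^n ≤ (↑q - 1) * (1-B) * (B + ↑q - 1)^n :=
    mul_le_mul_of_nonneg_left hpow (mul_nonneg hq1 h1B)
  have key : B * ↑q * (B + ↑q - 1)^n
      ≤ (B + ↑q - 1)^(n+1) + (if c = c' then (q:ℝ) - 1 else -1) * (B-1)^(n+1) := by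
    rw [show (B + ↑q - 1)^(n+1) = (B + ↑q - 1) * (B + ↑q - 1)^n from by ring]
    nlinarith [heps, h5]
  have main : B / (↑q * (B + ↑q - 1)) ≤ pathS B q (n+1) c c' / (↑q * (B + ↑q - 1)^(n+1)) := by
    rw [pathS_formula B q hqne (n+1) c c',
      div_le_div_iff₀ (mul_pos hq0 hA) (mul_pos hq0 (pow_pos hA (n+1)))]
    have hX : ((B + ↑q - 1)^(n+1) + (if c = c' then (q:ℝ) - 1 else -1) * (B-1)^(n+1)) / ↑q
        * (↑q * (B + ↑q - 1))
        = ((B + ↑q - 1)^(n+1) + (if c = c' then (q:ℝ) - 1 else -1) * (B-1)^(n+1))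
          * (B + ↑q - 1) := by
      set E := (if c = c' then (q:ℝ) - 1 else -1) with hE
      field_simp
    rw [hX, pow_succ]
    nlinarith [mul_le_mul_of_nonneg_right key (le_of_lt hA), hA, key]
  have hdiv : ∀ (i1 : Fintype (Fin (n+2) → Fin q)) (f g : (Fin (n+2) → Fin q) → ℝ),
      (@Finset.sum _ ℝ _ (@Finset.univ _ i1) f) / (@Finset.sum _ ℝ _ (@Finset.univ _ i1) g)
      = (@Finset.sum _ ℝ _ (@Finset.univ _ (Pi.instFintype : Fintype (Fin (n+2) → Fin q))) f) /
        (@Finset.sum _ ℝ _ (@Finset.univ _ (Pi.instFintype : Fintype (Fin (n+2) → Fin q))) g) := by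
    intro i1 f g
    rw [Subsingleton.elim i1 (Pi.instFintype : Fintype (Fin (n+2) → Fin q))]
  refine le_trans main (le_of_eq ?_)
  unfold pottsPr
  rw [hdiv]
  refine (congrArg₂ (· / ·) ?_ (hden _)).symm
  unfold pathS
  apply Finset.sum_congr rfl
  intro σ _
  simp only [Set.mem_setOf_eq, pow_mEdges]
  rfl
end
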